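/- Let r > s ≥ 2, m ≥ 1, N2' = 1 + s(r-1)·∑_{i=0}^{m-1}((r-1)(s-1))^i, and ρ = r/gcd(r,s). If ρ divides N2', then no bipartite biregular graph of degrees (r,s) and diameter 2m+1 attains the Moore bound M(r,s;2m+1); instead its order is at most (N2'/ρ − 1)·(ρ+σ), where σ = s/gcd(r,s). -/

import Mathlib

set_option linter.unusedSectionVars false

namespace Stmt7
open Finset SimpleGraph

variable {V : Type*} [Fintype V] [DecidableEq V] {G : SimpleGraph V} {V1 V2 : Finset V}

open Classical in
noncomputable def nbr (G : SimpleGraph V) (x : V) : Finset V :=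
  Finset.univ.filter (fun y => G.Adj x y)

noncomputable def lvl (G : SimpleGraph V) (u : V) (d : ℕ) : Finset V :=
  Finset.univ.filter (fun x => G.dist u x = d)

lemma mem_nbr {x y : V} : y ∈ nbr G x ↔ G.Adj x y := by
  classical simp [nbr]

lemma mem_lvl {u x : V} {d : ℕ} : x ∈ lvl G u d ↔ G.dist u x = d := by
  simp [lvl]

lemma nbr_card {x : V} : (nbr G x).card = (G.neighborSet x).ncard := by
  classical
  rw [Set.ncard_eq_toFinset_card']
  congr 1
  ext y
  simp [nbr]

lemma side_flip (hpart : ∀ v, (v ∈ V1 ∧ v ∉ V2) ∨ (v ∈ V2 ∧ v ∉ V1))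
    (hbip : ∀ u v, G.Adj u v → (u ∈ V1 ∧ v ∈ V2) ∨ (u ∈ V2 ∧ v ∈ V1))
    {a b : V} (h : G.Adj a b) : (a ∈ V1 ↔ b ∉ V1) := by
  have ha := hpart a; have hb := hpart b
  rcases hbip a b h with ⟨h1, h2⟩ | ⟨h1, h2⟩ <;> tauto

lemma walk_parity (hpart : ∀ v, (v ∈ V1 ∧ v ∉ V2) ∨ (v ∈ V2 ∧ v ∉ V1))
    (hbip : ∀ u v, G.Adj u v → (u ∈ V1 ∧ v ∈ V2) ∨ (u ∈ V2 ∧ v ∈ V1))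
    {a b : V} (p : G.Walk a b) : Even p.length ↔ (a ∈ V1 ↔ b ∈ V1) := by
  induction p with
  | nil => simp
  | cons h p ih =>
      have := side_flip hpart hbip h
      simp only [Walk.length_cons, Nat.even_add_one, ih]
      tauto

lemma dist_parity (hconn : G.Connected)
    (hpart : ∀ v, (v ∈ V1 ∧ v ∉ V2) ∨ (v ∈ V2 ∧ v ∉ V1))
    (hbip : ∀ u v, G.Adj u v → (u ∈ V1 ∧ v ∈ V2) ∨ (u ∈ V2 ∧ v ∈ V1))
    (a b : V) : Even (G.dist a b) ↔ (a ∈ V1 ↔ b ∈ V1) := by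
  obtain ⟨p, hp⟩ := (hconn.preconnected a b).exists_walk_length_eq_dist
  rw [← hp]
  exact walk_parity hpart hbip p

lemma exists_parent (hconn : G.Connected) {u x : V} {d : ℕ}
    (h : G.dist u x = d + 1) : ∃ y, G.Adj y x ∧ G.dist u y = d := by
  obtain ⟨p, hp⟩ := (hconn.preconnected u x).exists_walk_length_eq_dist
  rw [h] at hp
  have hq : p.reverse.length = d + 1 := by simp [hp]
  cases hq' : p.reverse with
  | nil => rw [hq'] at hq; simp at hq
  | cons hadj q =>
      rename_i y
      rw [hq'] at hq
      simp only [Walk.length_cons] at hq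
      refine ⟨y, hadj.symm, le_antisymm ?_ ?_⟩
      · calc G.dist u y ≤ q.reverse.length := dist_le _
          _ = d := by simpa using hq
      · by_contra hlt
        push_neg at hlt
        have h1 : G.dist u x ≤ G.dist u y + 1 := by
          have := hconn.dist_triangle (u := u) (v := y) (w := x)
          rwa [(dist_eq_one_iff_adj).mpr hadj.symm] at this
        omega

lemma adj_dist_cases (hconn : G.Connected)
    (hpart : ∀ v, (v ∈ V1 ∧ v ∉ V2) ∨ (v ∈ V2 ∧ v ∉ V1))
    (hbip : ∀ u v, G.Adj u v → (u ∈ V1 ∧ v ∈ V2) ∨ (u ∈ V2 ∧ v ∈ V1))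
    {u a b : V} (h : G.Adj a b) :
    G.dist u b = G.dist u a + 1 ∨ G.dist u a = G.dist u b + 1 := by
  have h1 : G.dist u b ≤ G.dist u a + 1 := by
    have := hconn.dist_triangle (u := u) (v := a) (w := b)
    rwa [(dist_eq_one_iff_adj).mpr h] at this
  have h2 : G.dist u a ≤ G.dist u b + 1 := by
    have := hconn.dist_triangle (u := u) (v := b) (w := a)
    rwa [(dist_eq_one_iff_adj).mpr h.symm] at this
  have hf := side_flip hpart hbip h
  have hne : ¬ (Even (G.dist u a) ↔ Even (G.dist u b)) := by
    rw [dist_parity hconn hpart hbip u a, dist_parity hconn hpart hbip u b]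
    tauto
  rw [Nat.even_iff, Nat.even_iff] at hne
  omega



lemma sum_nbr_comm (G : SimpleGraph V) (A B : Finset V) :
    ∑ a ∈ A, (nbr G a ∩ B).card = ∑ b ∈ B, (nbr G b ∩ A).card := by
  classical
  have h : ∀ (C : Finset V) (a : V), (nbr G a ∩ C).card
      = ∑ c ∈ C, if G.Adj a c then 1 else 0 := by
    intro C a
    rw [← Finset.sum_filter]
    have : nbr G a ∩ C = C.filter (fun c => G.Adj a c) := by
      ext y; simp [mem_nbr, and_comm]
    rw [this]
    simp
  simp only [h]
  rw [Finset.sum_comm]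
  congr 1; ext b; congr 1; ext a
  simp [adj_comm]

lemma all_one {A : Finset V} {f : V → ℕ} (h1 : ∀ x ∈ A, 1 ≤ f x)
    (h2 : ∑ x ∈ A, f x ≤ A.card) : ∀ x ∈ A, f x = 1 := by
  by_contra hc
  push_neg at hc
  obtain ⟨x, hx, hfx⟩ := hc
  have hlt : ∑ i ∈ A, (1 : ℕ) < ∑ i ∈ A, f i :=
    Finset.sum_lt_sum h1 ⟨x, hx, by have := h1 x hx; omega⟩
  rw [Finset.sum_const, smul_eq_mul, mul_one] at hlt
  omega



lemma lvl_zero (hconn : G.Connected) (u : V) : lvl G u 0 = {u} := by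
  ext x
  simp only [mem_lvl, Finset.mem_singleton, hconn.dist_eq_zero_iff]
  exact eq_comm

lemma lvl_one (u : V) : lvl G u 1 = nbr G u := by
  ext x
  simp [mem_lvl, mem_nbr, dist_eq_one_iff_adj]

lemma parent_card_pos (hconn : G.Connected) {u w : V} {d : ℕ}
    (hw : G.dist u w = d + 1) : 1 ≤ (nbr G w ∩ lvl G u d).card := by
  obtain ⟨y, hy, hyd⟩ := exists_parent hconn hw
  have : y ∈ nbr G w ∩ lvl G u d := by
    simp [mem_nbr, mem_lvl, hy.symm, hyd]
  exact Finset.card_pos.mpr ⟨y, this⟩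

lemma parent_card_one_lvl_zero (hconn : G.Connected) {u x : V}
    (hx : G.dist u x = 1) : (nbr G x ∩ lvl G u 0).card = 1 := by
  rw [lvl_zero hconn]
  have hadj : G.Adj x u := ((dist_eq_one_iff_adj).mp hx).symm
  have : nbr G x ∩ {u} = {u} := by
    ext y; simp only [Finset.mem_inter, Finset.mem_singleton, mem_nbr]
    constructor
    · tauto
    · rintro rfl; exact ⟨hadj, rfl⟩
  rw [this, Finset.card_singleton]

lemma nbr_split (hconn : G.Connected)
    (hpart : ∀ v, (v ∈ V1 ∧ v ∉ V2) ∨ (v ∈ V2 ∧ v ∉ V1))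
    (hbip : ∀ u v, G.Adj u v → (u ∈ V1 ∧ v ∈ V2) ∨ (u ∈ V2 ∧ v ∈ V1))
    {u w : V} {d : ℕ} (hw : G.dist u w = d + 1) :
    (nbr G w ∩ lvl G u d).card + (nbr G w ∩ lvl G u (d + 2)).card = (nbr G w).card := by
  rw [← Finset.card_union_of_disjoint]
  · congr 1
    rw [← Finset.inter_union_distrib_left]
    apply Finset.inter_eq_left.mpr
    intro y hy
    have hadj : G.Adj w y := mem_nbr.mp hy
    rcases adj_dist_cases hconn hpart hbip (u := u) hadj with h | h
    · simp [Finset.mem_union, mem_lvl]; omega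
    · simp [Finset.mem_union, mem_lvl]; omega
  · apply Finset.disjoint_left.mpr
    intro y h1 h2
    simp only [Finset.mem_inter, mem_lvl] at h1 h2
    omega

lemma children_card (hconn : G.Connected)
    (hpart : ∀ v, (v ∈ V1 ∧ v ∉ V2) ∨ (v ∈ V2 ∧ v ∉ V1))
    (hbip : ∀ u v, G.Adj u v → (u ∈ V1 ∧ v ∈ V2) ∨ (u ∈ V2 ∧ v ∈ V1))
    {u w : V} {d D : ℕ} (hw : G.dist u w = d + 1) (hD : (nbr G w).card = D) :
    (nbr G w ∩ lvl G u (d + 2)).card = D - (nbr G w ∩ lvl G u d).card := by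
  have := nbr_split hconn hpart hbip hw
  omega

lemma step_le (hconn : G.Connected)
    (hpart : ∀ v, (v ∈ V1 ∧ v ∉ V2) ∨ (v ∈ V2 ∧ v ∉ V1))
    (hbip : ∀ u v, G.Adj u v → (u ∈ V1 ∧ v ∈ V2) ∨ (u ∈ V2 ∧ v ∈ V1))
    {u : V} {e D : ℕ} (hD : ∀ w ∈ lvl G u (e + 1), (nbr G w).card = D) :
    (lvl G u (e + 2)).card ≤ (D - 1) * (lvl G u (e + 1)).card := by
  have h1 : (lvl G u (e + 2)).card ≤ ∑ x ∈ lvl G u (e + 2), (nbr G x ∩ lvl G u (e + 1)).card := by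
    calc (lvl G u (e + 2)).card = ∑ _x ∈ lvl G u (e + 2), 1 :=
          Finset.card_eq_sum_ones _
      _ ≤ _ := Finset.sum_le_sum fun x hx => parent_card_pos hconn (mem_lvl.mp hx)
  have h2 := sum_nbr_comm G (lvl G u (e + 2)) (lvl G u (e + 1))
  have h3 : ∑ w ∈ lvl G u (e + 1), (nbr G w ∩ lvl G u (e + 2)).card
      ≤ ∑ _w ∈ lvl G u (e + 1), (D - 1) := by
    apply Finset.sum_le_sum
    intro w hw
    have hwd := mem_lvl.mp hw
    rw [children_card hconn hpart hbip hwd (hD w hw)]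
    have := parent_card_pos hconn hwd
    omega
  rw [Finset.sum_const, smul_eq_mul, mul_comm] at h3
  omega

lemma step_parents_eq (hconn : G.Connected)
    (hpart : ∀ v, (v ∈ V1 ∧ v ∉ V2) ∨ (v ∈ V2 ∧ v ∉ V1))
    (hbip : ∀ u v, G.Adj u v → (u ∈ V1 ∧ v ∈ V2) ∨ (u ∈ V2 ∧ v ∈ V1))
    {u : V} {e D : ℕ} (hD : ∀ w ∈ lvl G u (e + 1), (nbr G w).card = D)
    (heq : (lvl G u (e + 2)).card = (D - 1) * (lvl G u (e + 1)).card) :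
    ∀ x ∈ lvl G u (e + 2), (nbr G x ∩ lvl G u (e + 1)).card = 1 := by
  apply all_one
  · intro x hx
    exact parent_card_pos hconn (mem_lvl.mp hx)
  · rw [sum_nbr_comm G (lvl G u (e + 2)) (lvl G u (e + 1))]
    have h3 : ∑ w ∈ lvl G u (e + 1), (nbr G w ∩ lvl G u (e + 2)).card
        ≤ ∑ _w ∈ lvl G u (e + 1), (D - 1) := by
      apply Finset.sum_le_sum
      intro w hw
      have hwd := mem_lvl.mp hw
      rw [children_card hconn hpart hbip hwd (hD w hw)]
      have := parent_card_pos hconn hwd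
      omega
    rw [Finset.sum_const, smul_eq_mul, mul_comm] at h3
    omega




/-! ### The tree-bound sequence for a `V2`-center -/

def cc (r s : ℕ) : ℕ → ℕ
  | 0 => 1
  | 1 => s
  | (d+2) => ((if Even (d+1) then s else r) - 1) * cc r s (d+1)

lemma cc_two_step (r s d : ℕ) :
    cc r s (d+2) = ((if Even (d+1) then s else r) - 1) * cc r s (d+1) := rfl

lemma cc_odd (r s : ℕ) (k : ℕ) :
    cc r s (2*k+1) = s * ((r-1)*(s-1))^k := by
  induction k with
  | zero => simp [cc]
  | succ k ih =>
      have hodd : ¬ Even (2*k+1) := by simp [Nat.even_add_one, parity_simps]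
      have heven : Even (2*k+2) := ⟨k+1, by ring⟩
      have h1 : cc r s (2*k+2) = (r-1) * cc r s (2*k+1) := by
        rw [show 2*k+2 = (2*k)+2 by ring, cc_two_step, if_neg (by simpa using hodd)]
      have h2 : cc r s (2*(k+1)+1) = (s-1) * cc r s (2*k+2) := by
        rw [show 2*(k+1)+1 = (2*k+1)+2 by ring, cc_two_step,
          if_pos (by simpa using heven)]
  
      rw [h2, h1, ih, pow_succ]
      ring
lemma cc_even (r s : ℕ) (k : ℕ) :
    cc r s (2*k+2) = s*(r-1) * ((r-1)*(s-1))^k := by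
  have hodd : ¬ Even (2*k+1) := by simp [Nat.even_add_one, parity_simps]
  have h1 : cc r s (2*k+2) = (r-1) * cc r s (2*k+1) := by
    rw [show 2*k+2 = (2*k)+2 by ring, cc_two_step, if_neg (by simpa using hodd)]
  rw [h1, cc_odd]
  ring

lemma mem2_iff (hpart : ∀ v, (v ∈ V1 ∧ v ∉ V2) ∨ (v ∈ V2 ∧ v ∉ V1)) {a : V} :
    a ∈ V2 ↔ a ∉ V1 := by
  have := hpart a; tauto

lemma lvl_side (hconn : G.Connected)
    (hpart : ∀ v, (v ∈ V1 ∧ v ∉ V2) ∨ (v ∈ V2 ∧ v ∉ V1))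
    (hbip : ∀ u v, G.Adj u v → (u ∈ V1 ∧ v ∈ V2) ∨ (u ∈ V2 ∧ v ∈ V1))
    {u w : V} {d : ℕ} (hu : u ∈ V2) (hw : G.dist u w = d) :
    (Even d → w ∈ V2) ∧ (¬ Even d → w ∈ V1) := by
  have hp := dist_parity hconn hpart hbip u w
  rw [hw] at hp
  have hu1 : u ∉ V1 := (mem2_iff hpart).mp hu
  have h2 := mem2_iff (V1 := V1) (V2 := V2) hpart (a := w)
  constructor
  · intro he; rw [h2]; tauto
  · intro he; tauto


section Center
variable (hconn : G.Connected)
    (hpart : ∀ v, (v ∈ V1 ∧ v ∉ V2) ∨ (v ∈ V2 ∧ v ∉ V1))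
    (hbip : ∀ u v, G.Adj u v → (u ∈ V1 ∧ v ∈ V2) ∨ (u ∈ V2 ∧ v ∈ V1))
    {r s : ℕ}
    (hdegn1 : ∀ w ∈ V1, (nbr G w).card = r)
    (hdegn2 : ∀ w ∈ V2, (nbr G w).card = s)

include hconn hpart hbip hdegn1 hdegn2

lemma deg_lvl2 {u : V} (hu : u ∈ V2) (d : ℕ) :
    ∀ w ∈ lvl G u (d+1), (nbr G w).card = (if Even (d+1) then s else r) := by
  intro w hw
  have hside := lvl_side hconn hpart hbip hu (mem_lvl.mp hw)
  by_cases he : Even (d+1)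
  · rw [if_pos he]; exact hdegn2 w (hside.1 he)
  · rw [if_neg he]; exact hdegn1 w (hside.2 he)

lemma lvl_le_cc {u : V} (hu : u ∈ V2) : ∀ d, (lvl G u d).card ≤ cc r s d := by
  intro d
  induction d with
  | zero => rw [lvl_zero hconn]; simp [cc]
  | succ e ih =>
      cases e with
      | zero =>
          rw [lvl_one]
          simpa [cc] using (hdegn2 u hu).le
      | succ e' =>
          calc (lvl G u (e'+2)).card
              ≤ ((if Even (e'+1) then s else r) - 1) * (lvl G u (e'+1)).card :=
                step_le hconn hpart hbip (deg_lvl2 hconn hpart hbip hdegn1 hdegn2 hu e')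
            _ ≤ ((if Even (e'+1) then s else r) - 1) * cc r s (e'+1) := by
                exact Nat.mul_le_mul_left _ ih
            _ = cc r s (e'+2) := (cc_two_step r s e').symm

lemma V2_card_eq_sum {u : V} (hu : u ∈ V2) {m : ℕ}
    (hdist : ∀ x, G.dist u x ≤ 2*m+1) :
    V2.card = ∑ k ∈ Finset.range (m+1), (lvl G u (2*k)).card := by
  have hset : V2 = (Finset.range (m+1)).biUnion (fun k => lvl G u (2*k)) := by
    ext x
    simp only [Finset.mem_biUnion, Finset.mem_range, mem_lvl]
    constructor
    · intro hx
      have hpar : Even (G.dist u x) := by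
        rw [dist_parity hconn hpart hbip u x]
        have h1 := (mem2_iff hpart).mp hu
        have h2 := (mem2_iff hpart).mp hx
        tauto
      obtain ⟨k, hk⟩ := hpar
      have := hdist x
      exact ⟨k, by omega, by omega⟩
    · rintro ⟨k, hk, hdx⟩
      exact (lvl_side hconn hpart hbip hu hdx).1 ⟨k, by ring⟩
  rw [hset]
  apply Finset.card_biUnion
  intro i _ j _ hij
  apply Finset.disjoint_left.mpr
  intro x h1 h2
  rw [mem_lvl] at h1 h2
  omega

omit hconn hpart hbip hdegn1 hdegn2 in
lemma sum_cc (m : ℕ) : ∑ k ∈ Finset.range (m+1), cc r s (2*k)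
    = 1 + s*(r-1) * ∑ i ∈ Finset.range m, ((r-1)*(s-1))^i := by
  rw [Finset.sum_range_succ']
  have h0 : cc r s (2*0) = 1 := rfl
  rw [h0, Finset.mul_sum]
  have h1 : ∀ k ∈ Finset.range m, cc r s (2*(k+1)) = s*(r-1)*((r-1)*(s-1))^k := by
    intro k _
    rw [show 2*(k+1) = 2*k+2 by ring]
    exact cc_even r s k
  rw [Finset.sum_congr rfl h1]
  omega

lemma moore_le {u : V} (hu : u ∈ V2) {m : ℕ}
    (hdist : ∀ x, G.dist u x ≤ 2*m+1) :
    V2.card ≤ 1 + s*(r-1) * ∑ i ∈ Finset.range m, ((r-1)*(s-1))^i := by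
  rw [V2_card_eq_sum hconn hpart hbip hdegn1 hdegn2 hu hdist, ← sum_cc (r := r) (s := s) m]
  exact Finset.sum_le_sum fun k _ => lvl_le_cc hconn hpart hbip hdegn1 hdegn2 hu (2*k)

lemma lvl_eq_cc {m : ℕ} (hr1 : 1 ≤ r - 1)
    (h2 : V2.card = 1 + s*(r-1) * ∑ i ∈ Finset.range m, ((r-1)*(s-1))^i)
    {u : V} (hu : u ∈ V2) (hdist : ∀ x, G.dist u x ≤ 2*m+1) :
    ∀ d ≤ 2*m, (lvl G u d).card = cc r s d := by
  have heven : ∀ k ∈ Finset.range (m+1), (lvl G u (2*k)).card = cc r s (2*k) := by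
    by_contra hc
    push_neg at hc
    obtain ⟨k, hk, hne⟩ := hc
    have hlt : ∑ k ∈ Finset.range (m+1), (lvl G u (2*k)).card
        < ∑ k ∈ Finset.range (m+1), cc r s (2*k) := by
      apply Finset.sum_lt_sum
      · exact fun i _ => lvl_le_cc hconn hpart hbip hdegn1 hdegn2 hu (2*i)
      · exact ⟨k, hk, lt_of_le_of_ne
          (lvl_le_cc hconn hpart hbip hdegn1 hdegn2 hu (2*k)) hne⟩
    rw [← V2_card_eq_sum hconn hpart hbip hdegn1 hdegn2 hu hdist,
      sum_cc (r := r) (s := s) m, ← h2] at hlt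
    omega
  intro d hd
  rcases Nat.even_or_odd d with ⟨k, hk⟩ | ⟨k, hk⟩
  · subst hk
    have := heven k (by simp only [Finset.mem_range]; omega)
    rwa [show 2*k = k+k by ring] at this
  · subst hk
    have hkm : k + 1 ≤ m := by omega
    have e1 : (lvl G u (2*k+2)).card = cc r s (2*k+2) := by
      have := heven (k+1) (by simp only [Finset.mem_range]; omega)
      rwa [show 2*(k+1) = 2*k+2 by ring] at this
    have hodd : ¬ Even (2*k+1) := by simp [Nat.even_add_one, parity_simps]
    have e2 : (lvl G u (2*k+2)).card
        ≤ (r - 1) * (lvl G u (2*k+1)).card := by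
      have := step_le hconn hpart hbip
        (deg_lvl2 hconn hpart hbip hdegn1 hdegn2 hu (2*k)) (e := 2*k)
      rwa [if_neg (by simpa using hodd)] at this
    have e3 : cc r s (2*k+2) = (r-1) * cc r s (2*k+1) := by
      rw [show 2*k+2 = 2*k+2 from rfl, cc_two_step r s (2*k),
        if_neg (by simpa using hodd)]
    have e4 : (lvl G u (2*k+1)).card ≤ cc r s (2*k+1) :=
      lvl_le_cc hconn hpart hbip hdegn1 hdegn2 hu _
    have e5 : (r-1) * cc r s (2*k+1) ≤ (r-1) * (lvl G u (2*k+1)).card := by omega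
    have := Nat.le_of_mul_le_mul_left e5 (by omega)
    omega

lemma up2 {m : ℕ} (hr1 : 1 ≤ r - 1)
    (h2 : V2.card = 1 + s*(r-1) * ∑ i ∈ Finset.range m, ((r-1)*(s-1))^i)
    {u x : V} {d : ℕ} (hu : u ∈ V2) (hdist : ∀ x, G.dist u x ≤ 2*m+1)
    (hx : G.dist u x = d+1) (hdm : d+1 ≤ 2*m) :
    (nbr G x ∩ lvl G u d).card = 1 := by
  cases d with
  | zero => exact parent_card_one_lvl_zero hconn hx
  | succ e =>
      refine step_parents_eq hconn hpart hbip
        (deg_lvl2 hconn hpart hbip hdegn1 hdegn2 hu e) ?_ x (mem_lvl.mpr hx)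
      have hc := lvl_eq_cc hconn hpart hbip hdegn1 hdegn2 hr1 h2 hu hdist
      rw [hc (e+2) (by omega), hc (e+1) (by omega), cc_two_step]

omit hconn hpart hbip hdegn1 hdegn2 in
lemma dist_adj_le (hconn : G.Connected) {a b : V} (h : G.Adj a b) (u : V) :
    G.dist u b ≤ G.dist u a + 1 := by
  have := hconn.dist_triangle (u := u) (v := a) (w := b)
  rwa [(dist_eq_one_iff_adj).mpr h] at this

lemma up1 {m : ℕ} (hr1 : 1 ≤ r - 1)
    (h2 : V2.card = 1 + s*(r-1) * ∑ i ∈ Finset.range m, ((r-1)*(s-1))^i)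
    (hdistAll : ∀ a b : V, G.dist a b ≤ 2*m+1)
    {v x : V} {d : ℕ} (hv : v ∈ V1) (hx : G.dist v x = d+1) (hdm : d+1 ≤ 2*m) :
    (nbr G x ∩ lvl G v d).card = 1 := by
  cases d with
  | zero => exact parent_card_one_lvl_zero hconn hx
  | succ e =>
      by_contra hne1
      have hpos := parent_card_pos hconn hx
      have h2lt : 1 < (nbr G x ∩ lvl G v (e+1)).card := by omega
      obtain ⟨y, hy, z, hz, hyz⟩ := Finset.one_lt_card.mp h2lt
      rw [Finset.mem_inter, mem_nbr, mem_lvl] at hy hz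
      obtain ⟨hxy, hdy⟩ := hy
      obtain ⟨hxz, hdz⟩ := hz
      -- u : the parent of v with respect to the center y
      have hyv : G.dist y v = e + 1 := by rw [SimpleGraph.dist_comm]; exact hdy
      obtain ⟨u, huv, hyu⟩ := exists_parent hconn hyv
      have hu2 : u ∈ V2 := by
        rw [mem2_iff hpart]
        have := side_flip hpart hbip huv
        tauto
      have hduv : G.dist u v = 1 := (dist_eq_one_iff_adj).mpr huv
      have hduy : G.dist u y = e := by rw [SimpleGraph.dist_comm]; exact hyu
      have hdux : G.dist u x = e + 1 := by
        have hle : G.dist u x ≤ e + 1 := by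
          have := dist_adj_le hconn hxy.symm u
          omega
        have hge : G.dist v x ≤ G.dist u x + 1 := by
          have h3 := hconn.dist_triangle (u := v) (v := u) (w := x)
          have : G.dist v u = 1 := (dist_eq_one_iff_adj).mpr huv.symm
          omega
        omega
      -- unique parent of x with respect to u
      have hP := up2 hconn hpart hbip hdegn1 hdegn2 hr1 h2 hu2 (hdistAll u)
        hdux (by omega)
      have hyP : y ∈ nbr G x ∩ lvl G u e := by
        rw [Finset.mem_inter, mem_nbr, mem_lvl]; exact ⟨hxy, hduy⟩
      -- distance from u to z is e or e+2
      rcases adj_dist_cases hconn hpart hbip (u := u) hxz with hc | hc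
      · -- dist u z = e + 2 : use unique parent of z w.r.t. u
        rw [hdux] at hc
        have hQ := up2 hconn hpart hbip hdegn1 hdegn2 hr1 h2 hu2 (hdistAll u)
          (show G.dist u z = (e+1)+1 by omega) (by omega)
        have hxQ : x ∈ nbr G z ∩ lvl G u (e+1) := by
          rw [Finset.mem_inter, mem_nbr, mem_lvl]; exact ⟨hxz.symm, hdux⟩
        -- w : the parent of z with respect to v
        obtain ⟨w, hwz, hvw⟩ := exists_parent hconn hdz
        have hduw : G.dist u w = e + 1 := by
          have hle : G.dist u w ≤ e + 1 := by
            have := hconn.dist_triangle (u := u) (v := v) (w := w)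
            omega
          have hge : G.dist u z ≤ G.dist u w + 1 := dist_adj_le hconn hwz u
          omega
        have hwQ : w ∈ nbr G z ∩ lvl G u (e+1) := by
          rw [Finset.mem_inter, mem_nbr, mem_lvl]; exact ⟨hwz.symm, hduw⟩
        have hwx : w ≠ x := by
          intro hfalse
          rw [hfalse] at hvw
          omega
        have := Finset.one_lt_card.mpr ⟨w, hwQ, x, hxQ, hwx⟩
        omega
      · -- dist u z = e : second parent of x w.r.t. u
        rw [hdux] at hc
        have hzP : z ∈ nbr G x ∩ lvl G u e := by
          rw [Finset.mem_inter, mem_nbr, mem_lvl]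
          exact ⟨hxz, by omega⟩
        have := Finset.one_lt_card.mpr ⟨y, hyP, z, hzP, hyz⟩
        omega

lemma lvl_side1 (hconn' : G.Connected) {v w : V} {d : ℕ} (hv : v ∈ V1)
    (hw : G.dist v w = d) :
    (Even d → w ∈ V1) ∧ (¬ Even d → w ∈ V2) := by
  have hp := dist_parity hconn hpart hbip v w
  rw [hw] at hp
  have h2 := mem2_iff (V1 := V1) (V2 := V2) hpart (a := w)
  constructor
  · intro he; tauto
  · intro he; rw [h2]; tauto

lemma deg_lvl1 {v : V} (hv : v ∈ V1) (d : ℕ) :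
    ∀ w ∈ lvl G v (d+1), (nbr G w).card = (if Even (d+1) then r else s) := by
  intro w hw
  have hside := lvl_side1 hconn hpart hbip hdegn1 hdegn2 hconn hv (mem_lvl.mp hw)
  by_cases he : Even (d+1)
  · rw [if_pos he]; exact hdegn1 w (hside.1 he)
  · rw [if_neg he]; exact hdegn2 w (hside.2 he)

lemma T_step {m : ℕ} (hr1 : 1 ≤ r - 1)
    (h2 : V2.card = 1 + s*(r-1) * ∑ i ∈ Finset.range m, ((r-1)*(s-1))^i)
    (hdistAll : ∀ a b : V, G.dist a b ≤ 2*m+1)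
    {v : V} (hv : v ∈ V1) {d : ℕ} (hdm : d+2 ≤ 2*m) :
    (lvl G v (d+2)).card = ((if Even (d+1) then r else s) - 1) * (lvl G v (d+1)).card := by
  have h1 : (lvl G v (d+2)).card = ∑ x ∈ lvl G v (d+2), (nbr G x ∩ lvl G v (d+1)).card := by
    rw [Finset.card_eq_sum_ones]
    apply Finset.sum_congr rfl
    intro x hx
    exact (up1 hconn hpart hbip hdegn1 hdegn2 hr1 h2 hdistAll hv (mem_lvl.mp hx) hdm).symm
  rw [h1, sum_nbr_comm G (lvl G v (d+2)) (lvl G v (d+1))]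
  have h3 : ∀ w ∈ lvl G v (d+1), (nbr G w ∩ lvl G v (d+2)).card
      = (if Even (d+1) then r else s) - 1 := by
    intro w hw
    have hwd := mem_lvl.mp hw
    rw [children_card hconn hpart hbip hwd
      (deg_lvl1 hconn hpart hbip hdegn1 hdegn2 hv d w hw)]
    rw [up1 hconn hpart hbip hdegn1 hdegn2 hr1 h2 hdistAll hv hwd (by omega)]
  rw [Finset.sum_congr rfl h3, Finset.sum_const, smul_eq_mul, mul_comm]

lemma T_even {m : ℕ} (hr1 : 1 ≤ r - 1)
    (h2 : V2.card = 1 + s*(r-1) * ∑ i ∈ Finset.range m, ((r-1)*(s-1))^i)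
    (hdistAll : ∀ a b : V, G.dist a b ≤ 2*m+1)
    {v : V} (hv : v ∈ V1) :
    ∀ k, k < m → (lvl G v (2*k+2)).card = r*(s-1) * ((r-1)*(s-1))^k := by
  intro k
  induction k with
  | zero =>
      intro hk
      have hstep := T_step hconn hpart hbip hdegn1 hdegn2 hr1 h2 hdistAll hv
        (d := 0) (by omega)
      have hone : ¬ Even (0+1) := by decide
      rw [if_neg hone] at hstep
      rw [show (2*0+2 : ℕ) = 0+2 by ring, hstep, lvl_one, hdegn1 v hv]
      simp [mul_comm]
  | succ k ih =>
      intro hk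
      have ih' := ih (by omega)
      have hodd1 : ¬ Even (2*k+2+1) := by simp [Nat.even_add_one, parity_simps]
      have heven1 : Even (2*k+1+1) := ⟨k+1, by ring⟩
      have hstep1 := T_step hconn hpart hbip hdegn1 hdegn2 hr1 h2 hdistAll hv
        (d := 2*k+2) (by omega)
      have hstep2 := T_step hconn hpart hbip hdegn1 hdegn2 hr1 h2 hdistAll hv
        (d := 2*k+1) (by omega)
      rw [if_neg hodd1] at hstep1
      rw [if_pos heven1] at hstep2
      rw [show 2*(k+1)+2 = (2*k+2)+2 by ring, hstep1,
        show 2*k+2+1 = (2*k+1)+2 by ring, hstep2,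
        show 2*k+1+1 = 2*k+2 by ring, ih', pow_succ]
      ring

lemma V1_ge {m : ℕ} (hr1 : 1 ≤ r - 1)
    (h2 : V2.card = 1 + s*(r-1) * ∑ i ∈ Finset.range m, ((r-1)*(s-1))^i)
    (hdistAll : ∀ a b : V, G.dist a b ≤ 2*m+1)
    {v : V} (hv : v ∈ V1) :
    1 + r*(s-1) * ∑ i ∈ Finset.range m, ((r-1)*(s-1))^i ≤ V1.card := by
  classical
  have hsub : (Finset.range (m+1)).biUnion (fun k => lvl G v (2*k)) ⊆ V1 := by
    intro x hx
    rw [Finset.mem_biUnion] at hx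
    obtain ⟨k, _, hxk⟩ := hx
    exact (lvl_side1 hconn hpart hbip hdegn1 hdegn2 hconn hv (mem_lvl.mp hxk)).1 ⟨k, by ring⟩
  have hcard : ((Finset.range (m+1)).biUnion (fun k => lvl G v (2*k))).card
      = ∑ k ∈ Finset.range (m+1), (lvl G v (2*k)).card := by
    apply Finset.card_biUnion
    intro i _ j _ hij
    apply Finset.disjoint_left.mpr
    intro x hx1 hx2
    rw [mem_lvl] at hx1 hx2
    omega
  have hsum : ∑ k ∈ Finset.range (m+1), (lvl G v (2*k)).card
      = 1 + r*(s-1) * ∑ i ∈ Finset.range m, ((r-1)*(s-1))^i := by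
    rw [Finset.sum_range_succ']
    have h0 : (lvl G v (2*0)).card = 1 := by
      rw [show (2*0 : ℕ) = 0 from rfl, lvl_zero hconn]; simp
    rw [h0, Finset.mul_sum]
    have h1 : ∀ k ∈ Finset.range m, (lvl G v (2*(k+1))).card
        = r*(s-1)*((r-1)*(s-1))^k := by
      intro k hk
      rw [show 2*(k+1) = 2*k+2 by ring]
      exact T_even hconn hpart hbip hdegn1 hdegn2 hr1 h2 hdistAll hv k
        (Finset.mem_range.mp hk)
    rw [Finset.sum_congr rfl h1]
    omega
  calc 1 + r*(s-1) * ∑ i ∈ Finset.range m, ((r-1)*(s-1))^i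
      = ((Finset.range (m+1)).biUnion (fun k => lvl G v (2*k))).card := by
        rw [hcard, hsum]
    _ ≤ V1.card := Finset.card_le_card hsub

lemma edge_count : r * V1.card = s * V2.card := by
  have key := sum_nbr_comm G V1 V2
  have h1 : ∀ a ∈ V1, nbr G a ∩ V2 = nbr G a := by
    intro a ha
    apply Finset.inter_eq_left.mpr
    intro y hy
    have hadj := mem_nbr.mp hy
    have := hpart a
    rcases hbip a y hadj with ⟨_, h⟩ | ⟨h, _⟩
    · exact h
    · tauto
  have h2 : ∀ b ∈ V2, nbr G b ∩ V1 = nbr G b := by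
    intro b hb
    apply Finset.inter_eq_left.mpr
    intro y hy
    have hadj := mem_nbr.mp hy
    have := hpart b
    rcases hbip b y hadj with ⟨h, _⟩ | ⟨_, h⟩
    · tauto
    · exact h
  rw [Finset.sum_congr rfl (fun a ha => by rw [h1 a ha] : ∀ a ∈ V1, (nbr G a ∩ V2).card = (nbr G a).card),
    Finset.sum_congr rfl (fun b hb => by rw [h2 b hb] : ∀ b ∈ V2, (nbr G b ∩ V1).card = (nbr G b).card)] at key
  rw [Finset.sum_congr rfl hdegn1, Finset.sum_congr rfl hdegn2] at key
  rw [Finset.sum_const, Finset.sum_const, smul_eq_mul, smul_eq_mul] at key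
  rw [mul_comm r, mul_comm s]
  exact key

lemma exists_both (hr : 1 ≤ r) (hs : 1 ≤ s) : (∃ v, v ∈ V1) ∧ (∃ u, u ∈ V2) := by
  obtain ⟨x⟩ := hconn.nonempty
  have hnbr : ∀ a : V, a ∈ V1 → ∃ y ∈ V2, True := by
    intro a ha
    have hc : 1 ≤ (nbr G a).card := by rw [hdegn1 a ha]; omega
    obtain ⟨y, hy⟩ := Finset.card_pos.mp hc
    have hadj := mem_nbr.mp hy
    have := hpart a
    rcases hbip a y hadj with ⟨_, h⟩ | ⟨h, _⟩
    · exact ⟨y, h, trivial⟩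
    · tauto
  have hnbr2 : ∀ a : V, a ∈ V2 → ∃ y ∈ V1, True := by
    intro a ha
    have hc : 1 ≤ (nbr G a).card := by rw [hdegn2 a ha]; omega
    obtain ⟨y, hy⟩ := Finset.card_pos.mp hc
    have hadj := mem_nbr.mp hy
    have := hpart a
    rcases hbip a y hadj with ⟨h, _⟩ | ⟨_, h⟩
    · tauto
    · exact ⟨y, h, trivial⟩
  rcases hpart x with ⟨hx, _⟩ | ⟨hx, _⟩
  · obtain ⟨y, hy, _⟩ := hnbr x hx
    exact ⟨⟨x, hx⟩, ⟨y, hy⟩⟩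
  · obtain ⟨y, hy, _⟩ := hnbr2 x hx
    exact ⟨⟨y, hy⟩, ⟨x, hx⟩⟩

omit hconn hpart hbip hdegn1 hdegn2 in
lemma arith_key {Q : ℕ} (hs : 2 ≤ s) (hrs : s < r) (hQ : 1 ≤ Q) :
    s * (1 + s*(r-1)*Q) < r * (1 + r*(s-1)*Q) := by
  obtain ⟨a, rfl⟩ : ∃ a, r = a + 1 := ⟨r - 1, by omega⟩
  obtain ⟨b, rfl⟩ : ∃ b, s = b + 1 := ⟨s - 1, by omega⟩
  simp only [Nat.add_sub_cancel]
  obtain ⟨c, hc, rfl⟩ : ∃ c, 1 ≤ c ∧ a = b + c := ⟨a - b, by omega, by omega⟩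
  obtain ⟨b', rfl⟩ : ∃ b', b = b' + 1 := ⟨b - 1, by omega⟩
  have hiden : (b'+1+c+1) * (1 + ((b'+1)+c+1)*(b'+1)*Q)
      = ((b'+1)+1)*(1 + ((b'+1)+1)*((b'+1)+c)*Q)
        + c + (b'*c*c + c*c + b'*b'*c + 2*b'*c)*Q := by ring
  omega

lemma not_moore_eq {m : ℕ} (hs : 2 ≤ s) (hrs : s < r) (hm : 1 ≤ m)
    (hdistAll : ∀ a b : V, G.dist a b ≤ 2*m+1)
    (h2 : V2.card = 1 + s*(r-1) * ∑ i ∈ Finset.range m, ((r-1)*(s-1))^i) :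
    False := by
  have hr1 : 1 ≤ r - 1 := by omega
  obtain ⟨⟨v, hv⟩, _⟩ := exists_both hconn hpart hbip hdegn1 hdegn2
    (by omega) (by omega)
  have hQ : 1 ≤ ∑ i ∈ Finset.range m, ((r-1)*(s-1))^i := by
    calc (1 : ℕ) = ((r-1)*(s-1))^0 := by simp
      _ ≤ _ := Finset.single_le_sum (f := fun i => ((r-1)*(s-1))^i)
          (fun i _ => Nat.zero_le _) (Finset.mem_range.mpr hm)
  have hV1 := V1_ge hconn hpart hbip hdegn1 hdegn2 hr1 h2 hdistAll hv
  have hedge := edge_count hconn hpart hbip hdegn1 hdegn2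
  have harith := arith_key (r := r) (s := s) hs hrs hQ
  have hmul : r * (1 + r*(s-1) * ∑ i ∈ Finset.range m, ((r-1)*(s-1))^i)
      ≤ r * V1.card := Nat.mul_le_mul_left r hV1
  rw [hedge, h2] at hmul
  omega

end Center

end Stmt7

/-- Let `r > s ≥ 2`, `m ≥ 1`, `N2' = 1 + s(r-1)·∑_{i<m}((r-1)(s-1))^i`,
`ρ = r/gcd(r,s)`, `σ = s/gcd(r,s)`.  If `ρ ∣ N2'`, then no bipartite biregular graph of
degrees `(r,s)` and diameter `2m+1` attains the Moore bound `⌊N2'/ρ⌋·(ρ+σ)`; instead its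
order is at most `(N2'/ρ − 1)·(ρ+σ)`. -/
theorem stmt_7 {V : Type*} [Fintype V] (G : SimpleGraph V) (V1 V2 : Finset V)
    (hpart : ∀ v, (v ∈ V1 ∧ v ∉ V2) ∨ (v ∈ V2 ∧ v ∉ V1))
    (hbip : ∀ u v, G.Adj u v → (u ∈ V1 ∧ v ∈ V2) ∨ (u ∈ V2 ∧ v ∈ V1))
    (r s m : ℕ) (hs : 2 ≤ s) (hrs : s < r) (hm : 1 ≤ m)
    (hdeg1 : ∀ v ∈ V1, (G.neighborSet v).ncard = r)
    (hdeg2 : ∀ v ∈ V2, (G.neighborSet v).ncard = s)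
    (hconn : G.Connected) (hdiam : G.diam = 2 * m + 1)
    (hdvd : (r / Nat.gcd r s) ∣
      (1 + s * (r - 1) * ∑ i ∈ Finset.range m, ((r - 1) * (s - 1)) ^ i)) :
    let ρ := r / Nat.gcd r s
    let σ := s / Nat.gcd r s
    let N2' := 1 + s * (r - 1) * ∑ i ∈ Finset.range m, ((r - 1) * (s - 1)) ^ i
    V1.card + V2.card ≠ (N2' / ρ) * (ρ + σ) ∧
      V1.card + V2.card ≤ (N2' / ρ - 1) * (ρ + σ) := by
  classical
  set ρ := r / Nat.gcd r s with hρdef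
  set σ := s / Nat.gcd r s with hσdef
  set N2' := 1 + s * (r - 1) * ∑ i ∈ Finset.range m, ((r - 1) * (s - 1)) ^ i with hNdef
  have hg : 0 < Nat.gcd r s := Nat.gcd_pos_of_pos_left _ (by omega)
  have hdegn1 : ∀ w ∈ V1, (Stmt7.nbr G w).card = r := fun w hw => by
    rw [Stmt7.nbr_card]; exact hdeg1 w hw
  have hdegn2 : ∀ w ∈ V2, (Stmt7.nbr G w).card = s := fun w hw => by
    rw [Stmt7.nbr_card]; exact hdeg2 w hw
  have hdne : G.ediam ≠ ⊤ :=
    SimpleGraph.ediam_ne_top_of_diam_ne_zero (by rw [hdiam]; omega)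
  have hdistAll : ∀ a b : V, G.dist a b ≤ 2*m+1 := fun a b =>
    le_of_le_of_eq (SimpleGraph.dist_le_diam hdne) hdiam
  obtain ⟨⟨v, hv⟩, ⟨u, hu⟩⟩ := Stmt7.exists_both hconn hpart hbip hdegn1 hdegn2
    (by omega) (by omega)
  have hle : V2.card ≤ N2' :=
    Stmt7.moore_le hconn hpart hbip hdegn1 hdegn2 hu (hdistAll u)
  have hne : V2.card ≠ N2' := fun h =>
    Stmt7.not_moore_eq hconn hpart hbip hdegn1 hdegn2 hs hrs hm hdistAll h
  have hlt : V2.card < N2' := lt_of_le_of_ne hle hne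
  have hedge := Stmt7.edge_count hconn hpart hbip hdegn1 hdegn2
  have hrg : r = Nat.gcd r s * ρ := (Nat.mul_div_cancel' (Nat.gcd_dvd_left r s)).symm
  have hsg : s = Nat.gcd r s * σ := (Nat.mul_div_cancel' (Nat.gcd_dvd_right r s)).symm
  have hcop : Nat.Coprime ρ σ := Nat.coprime_div_gcd_div_gcd hg
  have hkey : ρ * V1.card = σ * V2.card := by
    apply Nat.eq_of_mul_eq_mul_left hg
    rw [← mul_assoc, ← mul_assoc, ← hrg, ← hsg]
    exact hedge
  have hρpos : 0 < ρ := Nat.div_pos (Nat.le_of_dvd (by omega) (Nat.gcd_dvd_left r s)) hg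
  have hσpos : 0 < σ := Nat.div_pos (Nat.le_of_dvd (by omega) (Nat.gcd_dvd_right r s)) hg
  have hdvd2 : ρ ∣ V2.card := by
    have h' : ρ ∣ σ * V2.card := ⟨V1.card, hkey.symm⟩
    exact hcop.dvd_of_dvd_mul_left h'
  obtain ⟨t, ht⟩ := hdvd2
  obtain ⟨T, hT⟩ := hdvd
  have hV1card : V1.card = σ * t := by
    apply Nat.eq_of_mul_eq_mul_left hρpos
    rw [hkey, ht]; ring
  have htT : t < T := by
    rw [ht, hT] at hlt
    exact lt_of_mul_lt_mul_left hlt (Nat.zero_le ρ)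
  have hdivT : N2' / ρ = T := by rw [hT]; exact Nat.mul_div_cancel_left T hρpos
  have hsum : V1.card + V2.card = t * (ρ + σ) := by rw [hV1card, ht]; ring
  refine ⟨?_, ?_⟩
  · rw [hsum, hdivT]
    have hlt2 : t * (ρ + σ) < T * (ρ + σ) :=
      Nat.mul_lt_mul_of_pos_right htT (by omega : 0 < ρ + σ)
    omega
  · rw [hsum, hdivT]
    exact Nat.mul_le_mul_right _ (by omega : t ≤ T - 1)
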